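/- Let a, b, c be pairwise distinct real numbers and let β ≠ 0. Then R_{0,β,0} = {(0,y,0) : y ∈ ℝ} ∪ {(x, β/(2(a−b)), 0) : x ∈ ℝ} ∪ {(0, −β/(2(b−c)), z) : z ∈ ℝ}. In particular, if a > b > c, the two crossing points (0, β/(2(a−b)), 0) and (0, −β/(2(b−c)), 0) lie on opposite sides of the origin on the y-axis. -/

import Mathlib

lemma fin3_cases (j : Fin 3) : j = 0 ∨ j = 1 ∨ j = 2 := by
  obtain ⟨v, hv⟩ := j
  simp only [Fin.ext_iff]
  omega

lemma rank_le_one_of_row_rel (M : Matrix (Fin 2) (Fin 3) ℝ) (v : Fin 3 → ℝ)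
    (h0 : ∃ s : ℝ, M 0 = s • v) (h1 : ∃ t : ℝ, M 1 = t • v) : M.rank ≤ 1 := by
  rw [Matrix.rank_eq_finrank_span_row]
  have hle : Submodule.span ℝ (Set.range M) ≤ Submodule.span ℝ {v} := by
    rw [Submodule.span_le]
    rintro _ ⟨i, rfl⟩
    fin_cases i
    · obtain ⟨s, hs⟩ := h0
      exact Submodule.mem_span_singleton.2 ⟨s, hs.symm⟩
    · obtain ⟨t, ht⟩ := h1
      exact Submodule.mem_span_singleton.2 ⟨t, ht.symm⟩
  refine le_trans (Submodule.finrank_mono hle) ?_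
  by_cases hv : v = 0
  · subst hv
    rw [Submodule.span_zero_singleton]
    simp
  · rw [finrank_span_singleton hv]

lemma rank2x3_le_one_iff (M : Matrix (Fin 2) (Fin 3) ℝ) :
    M.rank ≤ 1 ↔
      (M 0 0 * M 1 1 = M 0 1 * M 1 0 ∧ M 0 0 * M 1 2 = M 0 2 * M 1 0 ∧
        M 0 1 * M 1 2 = M 0 2 * M 1 1) := by
  constructor
  · intro h
    by_cases hLI : LinearIndependent ℝ M
    · exfalso
      have := hLI.rank_matrix
      rw [Fintype.card_fin] at this
      omega
    · rw [linearIndependent_fin2 (f := M)] at hLI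
      push_neg at hLI
      by_cases h1 : M 1 = 0
      · have e : ∀ j, M 1 j = 0 := fun j => congrFun h1 j
        simp [e]
      · obtain ⟨a, ha⟩ := hLI h1
        have e : ∀ j, M 0 j = a * M 1 j := fun j => (congrFun ha j).symm
        refine ⟨?_, ?_, ?_⟩ <;> simp only [e] <;> ring
  · rintro ⟨m01, m02, m12⟩
    by_cases h0 : M 0 = 0
    · exact rank_le_one_of_row_rel M (M 1) ⟨0, by simp [h0]⟩ ⟨1, by simp⟩
    · refine rank_le_one_of_row_rel M (M 0) ⟨1, by simp⟩ ?_
      have hne : ¬ (M 0 0 = 0 ∧ M 0 1 = 0 ∧ M 0 2 = 0) := by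
        intro ⟨e0, e1, e2⟩
        apply h0
        funext j
        rcases fin3_cases j with rfl | rfl | rfl <;> assumption
      by_cases h00 : M 0 0 = 0
      · by_cases h01 : M 0 1 = 0
        · have h02 : M 0 2 ≠ 0 := fun h => hne ⟨h00, h01, h⟩
          refine ⟨M 1 2 / M 0 2, ?_⟩
          funext j
          rcases fin3_cases j with rfl | rfl | rfl <;>
            simp only [Pi.smul_apply, smul_eq_mul] <;>
            field_simp <;> nlinarith [m01, m02, m12]
        · refine ⟨M 1 1 / M 0 1, ?_⟩
          funext j
          rcases fin3_cases j with rfl | rfl | rfl <;>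
            simp only [Pi.smul_apply, smul_eq_mul] <;>
            field_simp <;> nlinarith [m01, m02, m12]
      · refine ⟨M 1 0 / M 0 0, ?_⟩
        funext j
        rcases fin3_cases j with rfl | rfl | rfl <;>
          simp only [Pi.smul_apply, smul_eq_mul] <;>
          field_simp <;> nlinarith [m01, m02, m12]

lemma minors_iff (A B C x y z : ℝ) :
    (!![A, B, C; x, y, z] : Matrix (Fin 2) (Fin 3) ℝ).rank ≤ 1 ↔
      (A * y = B * x ∧ A * z = C * x ∧ B * z = C * y) := by
  rw [rank2x3_le_one_iff]
  norm_num [Matrix.cons_val_zero, Matrix.cons_val_one, Matrix.head_cons, Matrix.cons_val_two, Matrix.tail_cons]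

/-- For pairwise distinct `a b c` and `β ≠ 0`, the set `R_{0,β,0}`
is the y-axis together with two crossing lines; moreover if `a > b > c` the two
crossing points lie on opposite sides of the origin on the y-axis. -/
theorem stmt_6 (a b c β : ℝ) (hab : a ≠ b) (hbc : b ≠ c) (hac : a ≠ c) (hβ : β ≠ 0) :
    ({p : ℝ × ℝ × ℝ |
        (!![2*a*p.1, 2*b*p.2.1 + β, 2*c*p.2.2; p.1, p.2.1, p.2.2] :
          Matrix (Fin 2) (Fin 3) ℝ).rank ≤ 1} =
      {q : ℝ × ℝ × ℝ | ∃ y : ℝ, q = (0, y, 0)} ∪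
      {q : ℝ × ℝ × ℝ | ∃ x : ℝ, q = (x, β / (2*(a-b)), 0)} ∪
      {q : ℝ × ℝ × ℝ | ∃ z : ℝ, q = (0, -β / (2*(b-c)), z)}) ∧
    (a > b → b > c → (β / (2*(a-b))) * (-β / (2*(b-c))) < 0) := by
  have hab' : a - b ≠ 0 := sub_ne_zero.2 hab
  have hbc' : b - c ≠ 0 := sub_ne_zero.2 hbc
  have hac' : a - c ≠ 0 := sub_ne_zero.2 hac
  constructor
  · ext ⟨x, y, z⟩
    simp only [Set.mem_setOf_eq, Set.mem_union, minors_iff, Prod.mk.injEq]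
    constructor
    · rintro ⟨m01, m02, m12⟩
      by_cases hx : x = 0
      · by_cases hz : z = 0
        · exact Or.inl (Or.inl ⟨y, hx, rfl, hz⟩)
        · refine Or.inr ⟨z, hx, ?_, rfl⟩
          have h3 : (2*(b-c)*y + β) * z = 0 := by nlinarith [m12]
          have h4 : 2*(b-c)*y + β = 0 := by
            rcases mul_eq_zero.1 h3 with h | h
            · exact h
            · exact absurd h hz
          field_simp
          linarith
      · refine Or.inl (Or.inr ⟨x, rfl, ?_, ?_⟩)
        · have h3 : (2*(a-b)*y - β) * x = 0 := by nlinarith [m01]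
          have h4 : 2*(a-b)*y - β = 0 := by
            rcases mul_eq_zero.1 h3 with h | h
            · exact h
            · exact absurd h hx
          field_simp
          linarith
        · have h2 : (2 * (a - c)) * (x * z) = 0 := by nlinarith [m02]
          have hxz : x * z = 0 := by
            rcases mul_eq_zero.1 h2 with h | h
            · exfalso; apply hac'; linarith
            · exact h
          rcases mul_eq_zero.1 hxz with h | h
          · exact absurd h hx
          · exact h
    · rintro ((⟨y', rfl, rfl, rfl⟩ | ⟨x', rfl, rfl, rfl⟩) | ⟨z', rfl, rfl, rfl⟩)
      · refine ⟨by ring, by ring, by ring⟩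
      · refine ⟨?_, by ring, by ring⟩
        field_simp
        ring
      · refine ⟨by ring, by ring, ?_⟩
        field_simp
        ring
  · intro h1 h2
    have habp : (0:ℝ) < a - b := by linarith
    have hbcp : (0:ℝ) < b - c := by linarith
    have key : (β / (2*(a-b))) * (-β / (2*(b-c))) = -(β^2) / ((2*(a-b)) * (2*(b-c))) := by
      field_simp
    rw [key]
    apply div_neg_of_neg_of_pos
    · have hb2 : (0:ℝ) < β^2 := by positivity
      linarith
    · positivity
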